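/- Let F be a field, Y, Z vector spaces over F, and y_1,…,y_n ∈ Y, z_1,…,z_n ∈ Z. Suppose that for every α ∈ F^n, rank(Σ_{i=1}^n α_i y_i ⊗ z_i) ≥ min(ω(α), k) for some fixed k ≤ n. Then any k of the vectors y_1,…,y_n are linearly independent, and any k of the vectors z_1,…,z_n are linearly independent (i.e., both families have k-rank at least k). -/
import Mathlib


open TensorProduct

/-- The rank of a 2-tensor: minimal number of simple tensors summing to it. -/
noncomputable def tensorRank2 {F Y Z : Type*} [Field F]
    [AddCommGroup Y] [Module F Y] [AddCommGroup Z] [Module F Z]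
    (t : TensorProduct F Y Z) : ℕ :=
  sInf {m | ∃ (a : Fin m → Y) (b : Fin m → Z), t = ∑ i, a i ⊗ₜ[F] b i}

lemma tensorRank2_le_of_rep {F Y Z : Type*} [Field F] [AddCommGroup Y] [Module F Y]
    [AddCommGroup Z] [Module F Z] {ι : Type*} (u : Finset ι)
    (a : ι → Y) (b : ι → Z) (t : TensorProduct F Y Z)
    (h : t = ∑ i ∈ u, a i ⊗ₜ[F] b i) : tensorRank2 t ≤ u.card := by
  apply Nat.sInf_le
  refine ⟨fun i => a (u.equivFin.symm i), fun i => b (u.equivFin.symm i), ?_⟩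
  rw [h, ← Finset.sum_coe_sort u (fun i => a i ⊗ₜ[F] b i)]
  exact (Equiv.sum_comp u.equivFin.symm (fun x : u => a x.1 ⊗ₜ[F] b x.1)).symm

lemma rep_left {F Y Z : Type*} [Field F] [AddCommGroup Y] [Module F Y]
    [AddCommGroup Z] [Module F Z] {ι : Type*} [DecidableEq ι] (s : Finset ι)
    (y : ι → Y) (z : ι → Z) (j : ι) (hj : j ∈ s) (c : ι → F)
    (hy : y j = ∑ i ∈ s.erase j, c i • y i) :
    ∑ i ∈ s, y i ⊗ₜ[F] z i = ∑ i ∈ s.erase j, y i ⊗ₜ[F] (z i + c i • z j) := by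
  rw [← Finset.add_sum_erase s _ hj, hy, sum_tmul, ← Finset.sum_add_distrib]
  apply Finset.sum_congr rfl
  intro i _
  rw [tmul_add, tmul_smul, smul_tmul']
  abel

lemma rep_right {F Y Z : Type*} [Field F] [AddCommGroup Y] [Module F Y]
    [AddCommGroup Z] [Module F Z] {ι : Type*} [DecidableEq ι] (s : Finset ι)
    (y : ι → Y) (z : ι → Z) (j : ι) (hj : j ∈ s) (c : ι → F)
    (hz : z j = ∑ i ∈ s.erase j, c i • z i) :
    ∑ i ∈ s, y i ⊗ₜ[F] z i = ∑ i ∈ s.erase j, (y i + c i • y j) ⊗ₜ[F] z i := by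
  rw [← Finset.add_sum_erase s _ hj, hz, tmul_sum, ← Finset.sum_add_distrib]
  apply Finset.sum_congr rfl
  intro i _
  rw [add_tmul, tmul_smul, smul_tmul']
  abel

/-- If `rank (∑ αᵢ yᵢ ⊗ zᵢ) ≥ min (ω α) k` for all `α`, then any `k` of the `yᵢ`
are linearly independent, and likewise for the `zᵢ`. -/
theorem conditionU_implies_krank
    (F Y Z : Type*) [Field F] [AddCommGroup Y] [Module F Y]
    [AddCommGroup Z] [Module F Z]
    (n k : ℕ) (hk : k ≤ n)
    (y : Fin n → Y) (z : Fin n → Z)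
    (hU : ∀ α : Fin n → F,
      min ({i | α i ≠ 0}.ncard) k ≤ tensorRank2 (∑ i, α i • (y i ⊗ₜ[F] z i))) :
    (∀ s : Finset (Fin n), s.card = k →
      LinearIndependent F (fun i : s => y i.1)) ∧
    (∀ s : Finset (Fin n), s.card = k →
      LinearIndependent F (fun i : s => z i.1)) := by
  classical
  constructor
  · intro s hs
    by_contra hdep
    rw [Fintype.not_linearIndependent_iff] at hdep
    obtain ⟨g, hg0, j, hgj⟩ := hdep
    set G : Fin n → F := fun i => if h : i ∈ s then g ⟨i, h⟩ else 0 with hG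
    have hGsum : ∑ i ∈ s, G i • y i = 0 := by
      rw [← hg0, ← Finset.sum_attach s (fun i => G i • y i), Finset.univ_eq_attach]
      apply Finset.sum_congr rfl
      intro x _
      simp [hG, x.2]
    have hjs : j.1 ∈ s := j.2
    have hGj : G j.1 ≠ 0 := by simpa [hG, hjs] using hgj
    have h1 : G j.1 • y j.1 = - ∑ i ∈ s.erase j.1, G i • y i := by
      have h2 := Finset.add_sum_erase s (fun i => G i • y i) hjs
      rw [hGsum] at h2
      exact eq_neg_of_add_eq_zero_left h2
    set c : Fin n → F := fun i => -(G j.1)⁻¹ * G i with hc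
    have hyj : y j.1 = ∑ i ∈ s.erase j.1, c i • y i := by
      have h3 : y j.1 = (G j.1)⁻¹ • (G j.1 • y j.1) := by
        rw [smul_smul, inv_mul_cancel₀ hGj, one_smul]
      rw [h3, h1, smul_neg, Finset.smul_sum, ← Finset.sum_neg_distrib]
      apply Finset.sum_congr rfl
      intro i _
      rw [smul_smul, ← neg_smul]; simp [hc, neg_mul]
    have hrep := rep_left s y z j.1 hjs c hyj
    set α : Fin n → F := fun i => if i ∈ s then (1:F) else 0 with hα
    have ht : ∑ i, α i • (y i ⊗ₜ[F] z i) = ∑ i ∈ s, y i ⊗ₜ[F] z i := by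
      simp only [hα, ite_smul, one_smul, zero_smul]
      rw [Finset.sum_ite_mem, Finset.univ_inter]
    have hcard : ({i | α i ≠ 0}).ncard = k := by
      have h4 : {i | α i ≠ 0} = ↑s := by ext i; simp [hα]
      rw [h4, Set.ncard_coe_finset, hs]
    have hle := hU α
    rw [ht, hcard, min_self] at hle
    have hrank := tensorRank2_le_of_rep (s.erase j.1) _ _ _ hrep
    rw [Finset.card_erase_of_mem hjs, hs] at hrank
    have hk1 : 1 ≤ k := hs ▸ Finset.card_pos.mpr ⟨j.1, hjs⟩
    omega
  · intro s hs
    by_contra hdep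
    rw [Fintype.not_linearIndependent_iff] at hdep
    obtain ⟨g, hg0, j, hgj⟩ := hdep
    set G : Fin n → F := fun i => if h : i ∈ s then g ⟨i, h⟩ else 0 with hG
    have hGsum : ∑ i ∈ s, G i • z i = 0 := by
      rw [← hg0, ← Finset.sum_attach s (fun i => G i • z i), Finset.univ_eq_attach]
      apply Finset.sum_congr rfl
      intro x _
      simp [hG, x.2]
    have hjs : j.1 ∈ s := j.2
    have hGj : G j.1 ≠ 0 := by simpa [hG, hjs] using hgj
    have h1 : G j.1 • z j.1 = - ∑ i ∈ s.erase j.1, G i • z i := by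
      have h2 := Finset.add_sum_erase s (fun i => G i • z i) hjs
      rw [hGsum] at h2
      exact eq_neg_of_add_eq_zero_left h2
    set c : Fin n → F := fun i => -(G j.1)⁻¹ * G i with hc
    have hzj : z j.1 = ∑ i ∈ s.erase j.1, c i • z i := by
      have h3 : z j.1 = (G j.1)⁻¹ • (G j.1 • z j.1) := by
        rw [smul_smul, inv_mul_cancel₀ hGj, one_smul]
      rw [h3, h1, smul_neg, Finset.smul_sum, ← Finset.sum_neg_distrib]
      apply Finset.sum_congr rfl
      intro i _
      rw [smul_smul, ← neg_smul]; simp [hc, neg_mul]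
    have hrep := rep_right s y z j.1 hjs c hzj
    set α : Fin n → F := fun i => if i ∈ s then (1:F) else 0 with hα
    have ht : ∑ i, α i • (y i ⊗ₜ[F] z i) = ∑ i ∈ s, y i ⊗ₜ[F] z i := by
      simp only [hα, ite_smul, one_smul, zero_smul]
      rw [Finset.sum_ite_mem, Finset.univ_inter]
    have hcard : ({i | α i ≠ 0}).ncard = k := by
      have h4 : {i | α i ≠ 0} = ↑s := by ext i; simp [hα]
      rw [h4, Set.ncard_coe_finset, hs]
    have hle := hU α
    rw [ht, hcard, min_self] at hle
    have hrank := tensorRank2_le_of_rep (s.erase j.1) _ _ _ hrep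
    rw [Finset.card_erase_of_mem hjs, hs] at hrank
    have hk1 : 1 ≤ k := hs ▸ Finset.card_pos.mpr ⟨j.1, hjs⟩
    omega
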